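/- (SLUB construction.) Let Θ ⊆ ℝ be an interval, let g : Θ → ℝ be twice differentiable on Θ, and let b21, b22 be constants with b21 ≤ g''(θ) ≤ b22 for all θ ∈ Θ. For θt ∈ Θ define b2(θ|θt) := b22 if θ ≤ θt and b2(θ|θt) := b21 if θ > θt. Then the function U(θ|θt) := g(θt) + g'(θt)(θ − θt) + (1/2) b2(θ|θt) (θ − θt)² is a U-function for g at θt. -/

import Mathlib

open Set

/-- Key lemma: second-order lower Taylor bound (expansion at left endpoint). -/
lemma slub_key (a b c : ℝ) (hab : a ≤ b) (g g' g'' : ℝ → ℝ)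
    (h1 : ∀ x ∈ Icc a b, HasDerivWithinAt g (g' x) (Icc a b) x)
    (h2 : ∀ x ∈ Icc a b, HasDerivWithinAt g' (g'' x) (Icc a b) x)
    (hc : ∀ x ∈ Icc a b, c ≤ g'' x) :
    g a + g' a * (b - a) + c / 2 * (b - a) ^ 2 ≤ g b := by
  set f : ℝ → ℝ := fun x => g x - g' a * x - c / 2 * (x - a) ^ 2 with hf
  set f' : ℝ → ℝ := fun x => g' x - g' a - c * (x - a) with hf'
  have hD : Convex ℝ (Icc a b) := convex_Icc a b
  have hderf : ∀ x ∈ Icc a b, HasDerivWithinAt f (f' x) (Icc a b) x := by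
    intro x hx
    have := ((h1 x hx).sub ((hasDerivWithinAt_id x _).const_mul (g' a))).sub
      ((((hasDerivWithinAt_id x (Icc a b)).sub_const a).pow 2).const_mul (c / 2))
    refine this.congr_deriv ?_
    simp [f']
    ring
  have hderf' : ∀ x ∈ Icc a b, HasDerivWithinAt f' (g'' x - c) (Icc a b) x := by
    intro x hx
    have := ((h2 x hx).sub_const (g' a)).sub
      (((hasDerivWithinAt_id x (Icc a b)).sub_const a).const_mul c)
    refine this.congr_deriv ?_
    ring
  have hcontf' : ContinuousOn f' (Icc a b) :=
    fun x hx => (hderf' x hx).continuousWithinAt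
  have hmono' : MonotoneOn f' (Icc a b) := by
    apply monotoneOn_of_hasDerivWithinAt_nonneg hD hcontf'
      (fun x hx => ((hderf' x (interior_subset hx)).mono interior_subset))
    intro x hx
    have := hc x (interior_subset hx)
    linarith
  have hf'a : f' a = 0 := by simp [f']
  have hf'nonneg : ∀ x ∈ Icc a b, 0 ≤ f' x := by
    intro x hx
    have := hmono' (left_mem_Icc.2 hab) hx hx.1
    rw [hf'a] at this; exact this
  have hmono : MonotoneOn f (Icc a b) := by
    apply monotoneOn_of_hasDerivWithinAt_nonneg hD
      (fun x hx => (hderf x hx).continuousWithinAt)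
      (fun x hx => ((hderf x (interior_subset hx)).mono interior_subset))
    intro x hx; exact hf'nonneg x (interior_subset hx)
  have := hmono (left_mem_Icc.2 hab) (right_mem_Icc.2 hab) hab
  simp only [f] at this
  nlinarith [this]

/-- Upper version: expansion at right endpoint. -/
lemma slub_key' (a b c : ℝ) (hab : a ≤ b) (g g' g'' : ℝ → ℝ)
    (h1 : ∀ x ∈ Icc a b, HasDerivWithinAt g (g' x) (Icc a b) x)
    (h2 : ∀ x ∈ Icc a b, HasDerivWithinAt g' (g'' x) (Icc a b) x)
    (hc : ∀ x ∈ Icc a b, g'' x ≤ c) :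
    g a ≤ g b + g' b * (a - b) + c / 2 * (a - b) ^ 2 := by
  set f : ℝ → ℝ := fun x => g x - g' b * x - c / 2 * (x - b) ^ 2 with hf
  set f' : ℝ → ℝ := fun x => g' x - g' b - c * (x - b) with hf'
  have hD : Convex ℝ (Icc a b) := convex_Icc a b
  have hderf : ∀ x ∈ Icc a b, HasDerivWithinAt f (f' x) (Icc a b) x := by
    intro x hx
    have := ((h1 x hx).sub ((hasDerivWithinAt_id x _).const_mul (g' b))).sub
      ((((hasDerivWithinAt_id x (Icc a b)).sub_const b).pow 2).const_mul (c / 2))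
    refine this.congr_deriv ?_
    simp [f']
    ring
  have hderf' : ∀ x ∈ Icc a b, HasDerivWithinAt f' (g'' x - c) (Icc a b) x := by
    intro x hx
    have := ((h2 x hx).sub_const (g' b)).sub
      (((hasDerivWithinAt_id x (Icc a b)).sub_const b).const_mul c)
    refine this.congr_deriv ?_
    ring
  have hanti' : AntitoneOn f' (Icc a b) := by
    apply antitoneOn_of_hasDerivWithinAt_nonpos hD
      (fun x hx => (hderf' x hx).continuousWithinAt)
      (fun x hx => ((hderf' x (interior_subset hx)).mono interior_subset))
    intro x hx
    have := hc x (interior_subset hx)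
    linarith
  have hf'b : f' b = 0 := by simp [f']
  have hf'nonneg : ∀ x ∈ Icc a b, 0 ≤ f' x := by
    intro x hx
    have := hanti' hx (right_mem_Icc.2 hab) hx.2
    rw [hf'b] at this; exact this
  have hmono : MonotoneOn f (Icc a b) := by
    apply monotoneOn_of_hasDerivWithinAt_nonneg hD
      (fun x hx => (hderf x hx).continuousWithinAt)
      (fun x hx => ((hderf x (interior_subset hx)).mono interior_subset))
    intro x hx; exact hf'nonneg x (interior_subset hx)
  have := hmono (left_mem_Icc.2 hab) (right_mem_Icc.2 hab) hab
  simp only [f] at this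
  nlinarith [this]

/-- SLUB construction: if `g` is twice differentiable on the interval `Θ`
with `b₂₁ ≤ g''(θ) ≤ b₂₂` on `Θ`, then for `θt ∈ Θ` the quadratic
`U(θ|θt) = g(θt) + g'(θt)(θ−θt) + (1/2)·b₂(θ|θt)·(θ−θt)²`,
where `b₂(θ|θt) = b₂₂` if `θ ≤ θt` and `b₂₁` otherwise, is a U-function for `g` at `θt`. -/
theorem stmt_7 (Θ : Set ℝ) (hΘ : Θ.OrdConnected) (g g' g'' : ℝ → ℝ) (b₂₁ b₂₂ : ℝ)
    (hderiv : ∀ θ ∈ Θ, HasDerivWithinAt g (g' θ) Θ θ)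
    (hderiv' : ∀ θ ∈ Θ, HasDerivWithinAt g' (g'' θ) Θ θ)
    (hlb : ∀ θ ∈ Θ, b₂₁ ≤ g'' θ) (hub : ∀ θ ∈ Θ, g'' θ ≤ b₂₂)
    (θt : ℝ) (hθt : θt ∈ Θ)
    (U : ℝ → ℝ)
    (hU : ∀ θ, U θ = g θt + g' θt * (θ - θt) +
      (1 / 2) * (if θ ≤ θt then b₂₂ else b₂₁) * (θ - θt) ^ 2) :
    (∀ θ ∈ Θ, θ < θt → g θ ≤ U θ) ∧
      g θt = U θt ∧
      (∀ θ ∈ Θ, θt < θ → U θ ≤ g θ) := by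
  refine ⟨?_, ?_, ?_⟩
  · intro θ hθ hlt
    have hsub : Icc θ θt ⊆ Θ := hΘ.out hθ hθt
    have key := slub_key' θ θt b₂₂ hlt.le g g' g''
      (fun x hx => (hderiv x (hsub hx)).mono hsub)
      (fun x hx => (hderiv' x (hsub hx)).mono hsub)
      (fun x hx => hub x (hsub hx))
    rw [hU θ, if_pos hlt.le]
    linarith
  · rw [hU θt, if_pos le_rfl]; ring
  · intro θ hθ hlt
    have hsub : Icc θt θ ⊆ Θ := hΘ.out hθt hθ
    have key := slub_key θt θ b₂₁ hlt.le g g' g''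
      (fun x hx => (hderiv x (hsub hx)).mono hsub)
      (fun x hx => (hderiv' x (hsub hx)).mono hsub)
      (fun x hx => hlb x (hsub hx))
    rw [hU θ, if_neg (not_le.mpr hlt)]
    linarith
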